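/- Fix constants τ, β with 0 < τ < β. There exists a constant C > 0, depending only on τ and β, such that for every ξ ∈ ℝ³ and every differentiable solution (û, v̂, ŵ) : [0, ∞) → ℂ³ of the Fourier-mode linearized JMGT system, for all t ≥ 0: (τ/2) · d/dt |ŵ(t)|² + (1/2) |ŵ(t)|² ≤ C (|ξ|⁴ |û(t) + τv̂(t)|² + |ξ|⁴ |v̂(t)|²). -/

import Mathlib

/-- Differential inequality for `|ŵ|²` along the Fourier-mode linearized JMGT system:
`(τ/2) d/dt |ŵ(t)|² + (1/2)|ŵ(t)|² ≤ C(|ξ|⁴|û+τv̂|² + |ξ|⁴|v̂|²)`. -/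
theorem jmgt_w_energy_inequality (τ β : ℝ) (hτ : 0 < τ) (hτβ : τ < β) :
    ∃ C > (0 : ℝ),
      ∀ (ξ : EuclideanSpace ℝ (Fin 3)) (u v w w' : ℝ → ℂ),
        (∀ t ≥ (0 : ℝ), HasDerivAt u (v t) t) →
        (∀ t ≥ (0 : ℝ), HasDerivAt v (w t) t) →
        (∀ t ≥ (0 : ℝ), HasDerivAt w (w' t) t) →
        (∀ t ≥ (0 : ℝ), (τ : ℂ) * w' t =
          -((‖ξ‖ ^ 2 : ℝ) : ℂ) * u t - ((β * ‖ξ‖ ^ 2 : ℝ) : ℂ) * v t - w t) →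
        ∀ t ≥ (0 : ℝ),
          (τ / 2) * deriv (fun s => ‖w s‖ ^ 2) t
              + (1 / 2) * ‖w t‖ ^ 2 ≤
            C * (‖ξ‖ ^ 4 * ‖u t + (τ : ℂ) * v t‖ ^ 2
              + ‖ξ‖ ^ 4 * ‖v t‖ ^ 2) := by
  refine ⟨1 + (β - τ) ^ 2, by positivity, ?_⟩
  intro ξ u v w w' hu hv hw heq t ht
  have hwt := hw t ht
  -- derivative of |w|^2
  have hconj : HasDerivAt (fun s => (starRingEnd ℂ) (w s)) ((starRingEnd ℂ) (w' t)) t :=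
    hwt.star
  have hmul : HasDerivAt (fun s => (starRingEnd ℂ) (w s) * w s)
      ((starRingEnd ℂ) (w' t) * w t + (starRingEnd ℂ) (w t) * w' t) t := hconj.mul hwt
  have hre : HasDerivAt (fun s => ((starRingEnd ℂ) (w s) * w s).re)
      (((starRingEnd ℂ) (w' t) * w t + (starRingEnd ℂ) (w t) * w' t).re) t :=
    (Complex.reCLM.hasFDerivAt.comp_hasDerivAt t hmul)
  have hfun : (fun s => ‖w s‖ ^ 2)
      = (fun s => ((starRingEnd ℂ) (w s) * w s).re) := by
    funext s
    rw [Complex.sq_norm, Complex.normSq_apply]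
    simp [Complex.mul_re]
  have hderiv : deriv (fun s => ‖w s‖ ^ 2) t
      = ((starRingEnd ℂ) (w' t) * w t + (starRingEnd ℂ) (w t) * w' t).re := by
    rw [hfun]; exact hre.deriv
  set K : ℝ := ‖ξ‖ ^ 2 with hK
  have hK0 : 0 ≤ K := by positivity
  set z : ℂ := u t + (τ : ℂ) * v t with hz
  -- rewrite the ODE
  have heqt : (τ : ℂ) * w' t
      = -(K : ℂ) * z - (((β - τ) * K : ℝ) : ℂ) * v t - w t := by
    rw [heq t ht, hz]; push_cast; ring
  -- key real identity
  have hkey : (τ / 2) * ((starRingEnd ℂ) (w' t) * w t + (starRingEnd ℂ) (w t) * w' t).re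
      = ((starRingEnd ℂ) (w t) * ((τ : ℂ) * w' t)).re := by
    have h1 : ((starRingEnd ℂ) (w' t) * w t).re = ((starRingEnd ℂ) (w t) * w' t).re := by
      simp [Complex.mul_re, Complex.conj_re, Complex.conj_im]; ring
    simp only [Complex.add_re, h1]
    have : (starRingEnd ℂ) (w t) * ((τ : ℂ) * w' t)
        = (τ : ℂ) * ((starRingEnd ℂ) (w t) * w' t) := by ring
    rw [this]
    simp [Complex.mul_re, Complex.ofReal_re, Complex.ofReal_im]
    ring
  set W : ℝ := ‖w t‖
  set P : ℝ := ‖z‖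
  set Q : ℝ := ‖v t‖
  have hW0 : 0 ≤ W := norm_nonneg _
  have hP0 : 0 ≤ P := norm_nonneg _
  have hQ0 : 0 ≤ Q := norm_nonneg _
  -- expand the right side of hkey using the ODE
  have hE : ((starRingEnd ℂ) (w t) * ((τ : ℂ) * w' t)).re
      = ((starRingEnd ℂ) (w t) * (-(K : ℂ) * z)).re
        + ((starRingEnd ℂ) (w t) * (-(((β - τ) * K : ℝ) : ℂ) * v t)).re
        - W ^ 2 := by
    rw [heqt]
    have : (starRingEnd ℂ) (w t) * (-(K : ℂ) * z - (((β - τ) * K : ℝ) : ℂ) * v t - w t)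
        = (starRingEnd ℂ) (w t) * (-(K : ℂ) * z)
          + (starRingEnd ℂ) (w t) * (-(((β - τ) * K : ℝ) : ℂ) * v t)
          - (starRingEnd ℂ) (w t) * w t := by ring
    rw [this]
    have hww : ((starRingEnd ℂ) (w t) * w t).re = W ^ 2 := by
      rw [show W ^ 2 = Complex.normSq (w t) from Complex.sq_norm _,
        Complex.normSq_apply]
      simp [Complex.mul_re]
    simp only [Complex.sub_re, Complex.add_re, hww]
  -- bounds on the two cross terms
  have hb1 : ((starRingEnd ℂ) (w t) * (-(K : ℂ) * z)).re ≤ K * W * P := by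
    calc ((starRingEnd ℂ) (w t) * (-(K : ℂ) * z)).re
        ≤ ‖(starRingEnd ℂ) (w t) * (-(K : ℂ) * z)‖ := Complex.re_le_norm _
      _ = W * (K * P) := by
          rw [norm_mul, norm_mul, Complex.norm_conj]
          simp [abs_of_nonneg hK0]
          rfl
      _ = K * W * P := by ring
  have hb2 : ((starRingEnd ℂ) (w t) * (-(((β - τ) * K : ℝ) : ℂ) * v t)).re
      ≤ (β - τ) * K * W * Q := by
    have hβτ : 0 ≤ (β - τ) * K := mul_nonneg (by linarith) hK0
    calc ((starRingEnd ℂ) (w t) * (-(((β - τ) * K : ℝ) : ℂ) * v t)).re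
        ≤ ‖(starRingEnd ℂ) (w t) * (-(((β - τ) * K : ℝ) : ℂ) * v t)‖ :=
          Complex.re_le_norm _
      _ = W * ((β - τ) * K * Q) := by
          rw [norm_mul, norm_mul, Complex.norm_conj, norm_neg,
            Complex.norm_real, Real.norm_eq_abs, abs_of_nonneg hβτ]
      _ = (β - τ) * K * W * Q := by ring
  have hξ4 : ‖ξ‖ ^ 4 = K ^ 2 := by rw [hK]; ring
  rw [hderiv, hkey, hE, hξ4]
  have hβ : 0 < β - τ := by linarith
  nlinarith [sq_nonneg (W - 2 * K * P), sq_nonneg (W - 2 * (β - τ) * K * Q),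
    sq_nonneg (K * Q), sq_nonneg (K * P), mul_nonneg (mul_nonneg hK0 hW0) hP0,
    sq_nonneg ((β - τ) * K * Q)]
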